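/- Let F : ℝ × [0,∞) → ℝ be C² and let w(x,t) = (1/(2c)) ∫₀ᵗ ∫_{x-c(t-s)}^{x+c(t-s)} F(y,s) dy ds be the solution of the forced wave equation ∂²w/∂t² = c²∂²w/∂x² + F with zero initial data. Then for α > 0, v(x,t) = (2/B(α,1/2)) ∫₀¹ (1-u²)^{α-1} w(x,ut) du satisfies ∂²v/∂t² + (2α/t)∂v/∂t = c²∂²v/∂x² + (2/B(α,1/2)) ∫₀¹ (1-u²)^{α-1} F(x,ut) du for t > 0. -/

import Mathlib

open Real MeasureTheory intervalIntegral Set Metric Filter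

lemma gInt {α : ℝ} (hα : 0 < α) :
    IntervalIntegrable (fun u : ℝ => (1 - u ^ 2) ^ (α - 1)) volume 0 1 := by
  have h1 : IntervalIntegrable (fun u : ℝ => (1 - u) ^ (α - 1)) volume 0 1 := by
    have h := (intervalIntegrable_rpow' (a := 0) (b := 1) (r := α-1) (by linarith)).comp_sub_left 1
    simpa using h.symm
  set C : ℝ := max 1 (2 ^ (α - 1)) with hC
  have hC0 : 0 ≤ C := le_trans zero_le_one (le_max_left _ _)
  rw [intervalIntegrable_iff, uIoc_of_le (by norm_num : (0:ℝ) ≤ 1)] at h1 ⊢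
  refine Integrable.mono' (h1.const_mul C) ?_ ?_
  · have : Measurable (fun u : ℝ => (1 - u ^ 2) ^ (α - 1)) := by measurability
    exact this.aestronglyMeasurable
  · filter_upwards [ae_restrict_mem measurableSet_Ioc] with u hu
    have hu1 : 0 ≤ 1 - u := by linarith [hu.2]
    have hu2 : 0 ≤ 1 + u := by linarith [hu.1.le]
    have hfac : (1:ℝ) - u ^ 2 = (1 - u) * (1 + u) := by ring
    rw [Real.norm_eq_abs, abs_of_nonneg (Real.rpow_nonneg (by nlinarith : (0:ℝ) ≤ 1 - u^2) _),
      hfac, Real.mul_rpow hu1 hu2]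
    have hb : (1 + u) ^ (α - 1) ≤ C := by
      rcases le_or_gt 1 α with h | h
      · refine le_trans (Real.rpow_le_rpow hu2 (by linarith [hu.2] : 1 + u ≤ 2) (by linarith)) ?_
        exact le_max_right _ _
      · refine le_trans (Real.rpow_le_one_of_one_le_of_nonpos (by linarith [hu.1.le]) (by linarith)) ?_
        exact le_max_left _ _
    calc (1 - u) ^ (α - 1) * (1 + u) ^ (α - 1)
        ≤ (1 - u) ^ (α - 1) * C := by
          exact mul_le_mul_of_nonneg_left hb (Real.rpow_nonneg hu1 _)
      _ = C * (1 - u) ^ (α - 1) := by ring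

lemma leibniz {G G' : ℝ → ℝ → ℝ} (hG : Continuous (Function.uncurry G))
    (hG' : Continuous (Function.uncurry G'))
    (hd : ∀ t s, HasDerivAt (fun τ => G τ s) (G' t s) t) (t₀ : ℝ) :
    HasDerivAt (fun t => ∫ s in (0:ℝ)..t, G t s)
      (G t₀ t₀ + ∫ s in (0:ℝ)..t₀, G' t₀ s) t₀ := by
  have hGc : ∀ t, Continuous (fun s => G t s) := fun t => hG.comp (Continuous.prodMk_right t)
  have hG'c : ∀ t, Continuous (fun s => G' t s) := fun t => hG'.comp (Continuous.prodMk_right t)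
  -- bound for G' on compact set
  obtain ⟨M, hM⟩ := (isCompact_Icc.prod isCompact_uIcc).exists_bound_of_continuousOn
    (hG'.continuousOn (s := Icc (t₀ - 1) (t₀ + 1) ×ˢ uIcc 0 t₀))
  have h1 : HasDerivAt (fun t => ∫ s in (0:ℝ)..t₀, G t s) (∫ s in (0:ℝ)..t₀, G' t₀ s) t₀ := by
    refine (intervalIntegral.hasDerivAt_integral_of_dominated_loc_of_deriv_le
      (F := fun t s => G t s) (F' := fun t s => G' t s) (bound := fun _ => M)
      (Metric.ball_mem_nhds _ one_pos) ?_ ?_ ?_ ?_ ?_ ?_).2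
    · exact Filter.Eventually.of_forall fun t => (hGc t).aestronglyMeasurable
    · exact (hGc t₀).intervalIntegrable _ _
    · exact (hG'c t₀).aestronglyMeasurable
    · refine Filter.Eventually.of_forall fun s hs x hx => ?_
      exact hM (x, s) ⟨⟨by linarith [abs_lt.mp (by simpa [Real.dist_eq] using hx)],
        by linarith [(abs_lt.mp (by simpa [Real.dist_eq] using hx)).2]⟩,
        uIoc_subset_uIcc (by exact hs)⟩
    · exact intervalIntegrable_const
    · exact Filter.Eventually.of_forall fun s _ x _ => hd x s
  have h2 : HasDerivAt (fun t => ∫ s in t₀..t, G t s) (G t₀ t₀) t₀ := by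
    rw [hasDerivAt_iff_isLittleO, Asymptotics.isLittleO_iff]
    intro ε hε
    obtain ⟨δ, hδpos, hδ⟩ := Metric.continuousAt_iff.mp (hG.continuousAt (x := (t₀, t₀))) ε hε
    filter_upwards [Metric.ball_mem_nhds t₀ hδpos] with x hx
    have hxd : |x - t₀| < δ := by simpa [Real.dist_eq] using hx
    have key : ∀ s ∈ uIoc t₀ x, ‖G x s - G t₀ t₀‖ ≤ ε := by
      intro s hs
      have hsd : |s - t₀| ≤ |x - t₀| := by
        rcases le_total t₀ x with h | h
        · rw [uIoc_of_le h] at hs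
          rw [abs_of_nonneg (by linarith [hs.1.le]), abs_of_nonneg (by linarith)]
          linarith [hs.2]
        · rw [uIoc_of_ge h] at hs
          rw [abs_of_nonpos (by linarith [hs.2]), abs_of_nonpos (by linarith)]
          linarith [hs.1.le]
      have : dist ((x, s) : ℝ × ℝ) (t₀, t₀) < δ := by
        rw [Prod.dist_eq]
        exact max_lt (by simpa [Real.dist_eq] using hxd)
          (by simp [Real.dist_eq]; linarith)
      exact (hδ this).le
    have hint : ∀ t, IntervalIntegrable (fun s => G t s) volume t₀ x :=
      fun t => (hGc t).intervalIntegrable _ _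
    have heq : (∫ s in t₀..x, G x s) - (∫ s in t₀..t₀, G t₀ s) - (x - t₀) • G t₀ t₀
        = ∫ s in t₀..x, (G x s - G t₀ t₀) := by
      rw [intervalIntegral.integral_sub (hint x) intervalIntegrable_const,
        intervalIntegral.integral_const, intervalIntegral.integral_same]
      ring_nf
    calc ‖(∫ s in t₀..x, G x s) - (∫ s in t₀..t₀, G t₀ s) - (x - t₀) • G t₀ t₀‖
        = ‖∫ s in t₀..x, (G x s - G t₀ t₀)‖ := by rw [heq]
      _ ≤ ε * |x - t₀| := intervalIntegral.norm_integral_le_of_norm_le_const key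
      _ = ε * ‖x - t₀‖ := rfl
  have hsum := h1.add h2
  have hfeq : (fun t => (∫ s in (0:ℝ)..t₀, G t s) + ∫ s in t₀..t, G t s)
      = fun t => ∫ s in (0:ℝ)..t, G t s := by
    funext t
    exact intervalIntegral.integral_add_adjacent_intervals
      ((hGc t).intervalIntegrable _ _) ((hGc t).intervalIntegrable _ _)
  rw [← hfeq]
  refine hsum.congr_deriv ?_
  ring

lemma contComp {H : ℝ → ℝ → ℝ} (hH : Continuous (Function.uncurry H))
    {u : ℝ × ℝ → ℝ} (hu : Continuous u) :
    Continuous fun p : ℝ × ℝ => H (u p) p.2 :=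
  hH.comp (hu.prodMk continuous_snd)

lemma domt {H H' : ℝ → ℝ → ℝ} (hH : Continuous (Function.uncurry H))
    (hH' : Continuous (Function.uncurry H'))
    (hd : ∀ a s, HasDerivAt (fun y => H y s) (H' a s) a) (c x e : ℝ) (t : ℝ) :
    HasDerivAt (fun τ => ∫ s in (0:ℝ)..τ, (H (x + c*(τ-s)) s + e * H (x - c*(τ-s)) s))
      ((1+e) * H x t + ∫ s in (0:ℝ)..t,
        (c * H' (x + c*(t-s)) s - e * c * H' (x - c*(t-s)) s)) t := by
  have hG : Continuous (Function.uncurry fun τ s => H (x + c*(τ-s)) s + e * H (x - c*(τ-s)) s) :=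
    (contComp hH (by fun_prop)).add (continuous_const.mul (contComp hH (by fun_prop)))
  have hG' : Continuous (Function.uncurry fun τ s =>
      c * H' (x + c*(τ-s)) s - e * c * H' (x - c*(τ-s)) s) :=
    (continuous_const.mul (contComp hH' (by fun_prop))).sub
      (continuous_const.mul (contComp hH' (by fun_prop)))
  have hdG : ∀ τ s, HasDerivAt (fun τ => H (x + c*(τ-s)) s + e * H (x - c*(τ-s)) s)
      (c * H' (x + c*(τ-s)) s - e * c * H' (x - c*(τ-s)) s) τ := by
    intro τ s
    have ha1 : HasDerivAt (fun τ : ℝ => x + c*(τ-s)) c τ := by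
      simpa using (((hasDerivAt_id τ).sub_const s).const_mul c).const_add x
    have ha2 : HasDerivAt (fun τ : ℝ => x - c*(τ-s)) (-c) τ := by
      simpa using (((hasDerivAt_id τ).sub_const s).const_mul c).const_sub x
    have h1 := (hd (x + c*(τ-s)) s).comp τ ha1
    have h2 := ((hd (x - c*(τ-s)) s).comp τ ha2).const_mul e
    refine (h1.add h2).congr_deriv ?_
    ring
  have := leibniz hG hG' hdG t
  convert this using 2
  ring

lemma domx {H H' : ℝ → ℝ → ℝ} (hH : Continuous (Function.uncurry H))
    (hH' : Continuous (Function.uncurry H'))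
    (hd : ∀ a s, HasDerivAt (fun y => H y s) (H' a s) a) (c e : ℝ) (x t : ℝ) :
    HasDerivAt (fun ρ => ∫ s in (0:ℝ)..t, (H (ρ + c*(t-s)) s + e * H (ρ - c*(t-s)) s))
      (∫ s in (0:ℝ)..t, (H' (x + c*(t-s)) s + e * H' (x - c*(t-s)) s)) x := by
  obtain ⟨M, hM⟩ := (isCompact_Icc.prod isCompact_uIcc).exists_bound_of_continuousOn
    (hH'.continuousOn (s := Icc (x - 1 - |c| * |t|) (x + 1 + |c| * |t|) ×ˢ uIcc 0 t))
  have harg : ∀ ρ ∈ ball x 1, ∀ s ∈ uIcc (0:ℝ) t, ∀ σ : ℝ, |σ| ≤ 1 →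
      ρ + σ * (c*(t-s)) ∈ Icc (x - 1 - |c| * |t|) (x + 1 + |c| * |t|) := by
    intro ρ hρ s hs σ hσ
    have h1 : |ρ - x| < 1 := by simpa [Real.dist_eq] using hρ
    have h2 : |t - s| ≤ |t| := by
      rcases le_total 0 t with h | h
      · rw [uIcc_of_le h] at hs
        rw [abs_of_nonneg (by linarith [hs.2]), abs_of_nonneg h]; linarith [hs.1]
      · rw [uIcc_of_ge h] at hs
        rw [abs_of_nonpos (by linarith [hs.1]), abs_of_nonpos h]; linarith [hs.2]
    have h3 : |σ * (c*(t-s))| ≤ |c| * |t| := by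
      rw [abs_mul, abs_mul]
      calc |σ| * (|c| * |t - s|) ≤ 1 * (|c| * |t|) :=
            mul_le_mul hσ (mul_le_mul_of_nonneg_left h2 (abs_nonneg c)) (by positivity) zero_le_one
        _ = |c| * |t| := one_mul _
    constructor
    · nlinarith [abs_lt.mp h1, abs_le.mp h3]
    · nlinarith [abs_lt.mp h1, abs_le.mp h3]
  have key := intervalIntegral.hasDerivAt_integral_of_dominated_loc_of_deriv_le
    (F := fun ρ s => H (ρ + c*(t-s)) s + e * H (ρ - c*(t-s)) s)
    (F' := fun ρ s => H' (ρ + c*(t-s)) s + e * H' (ρ - c*(t-s)) s)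
    (bound := fun _ => (1 + |e|) * M) (a := 0) (b := t) (μ := volume) (x₀ := x)
    (Metric.ball_mem_nhds _ one_pos) ?_ ?_ ?_ ?_ ?_ ?_
  · exact key.2
  · refine Filter.Eventually.of_forall fun ρ => Continuous.aestronglyMeasurable ?_
    exact (hH.comp (by fun_prop : Continuous fun s : ℝ => (ρ + c*(t-s), s))).add
      (continuous_const.mul (hH.comp (by fun_prop : Continuous fun s : ℝ => (ρ - c*(t-s), s))))
  · exact ((hH.comp (by fun_prop : Continuous fun s : ℝ => (x + c*(t-s), s))).add
      (continuous_const.mul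
        (hH.comp (by fun_prop : Continuous fun s : ℝ => (x - c*(t-s), s))))).intervalIntegrable _ _
  · exact Continuous.aestronglyMeasurable
      ((hH'.comp (by fun_prop : Continuous fun s : ℝ => (x + c*(t-s), s))).add
        (continuous_const.mul (hH'.comp (by fun_prop : Continuous fun s : ℝ => (x - c*(t-s), s)))))
  · refine Filter.Eventually.of_forall fun s hs ρ hρ => ?_
    have hs' : s ∈ uIcc (0:ℝ) t := uIoc_subset_uIcc hs
    have b1 : |H' (ρ + c*(t-s)) s| ≤ M := by
      have := hM (ρ + c*(t-s), s) ⟨by simpa using harg ρ hρ s hs' 1 (by norm_num), hs'⟩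
      simpa [Real.norm_eq_abs] using this
    have b2 : |H' (ρ - c*(t-s)) s| ≤ M := by
      have h := harg ρ hρ s hs' (-1) (by norm_num)
      have := hM (ρ - c*(t-s), s) ⟨by
        simpa [sub_eq_add_neg, neg_mul] using h, hs'⟩
      simpa [Real.norm_eq_abs] using this
    calc ‖H' (ρ + c*(t-s)) s + e * H' (ρ - c*(t-s)) s‖
        ≤ |H' (ρ + c*(t-s)) s| + |e| * |H' (ρ - c*(t-s)) s| := by
          rw [Real.norm_eq_abs]
          refine le_trans (abs_add_le _ _) ?_
          rw [abs_mul]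
      _ ≤ M + |e| * M := add_le_add b1 (mul_le_mul_of_nonneg_left b2 (abs_nonneg e))
      _ = (1 + |e|) * M := by ring
  · exact intervalIntegrable_const
  · refine Filter.Eventually.of_forall fun s hs ρ hρ => ?_
    have ha1 : HasDerivAt (fun ρ : ℝ => ρ + c*(t-s)) 1 ρ := by
      simpa using (hasDerivAt_id ρ).add_const (c*(t-s))
    have ha2 : HasDerivAt (fun ρ : ℝ => ρ - c*(t-s)) 1 ρ := by
      simpa using (hasDerivAt_id ρ).sub_const (c*(t-s))
    have h1 := (hd (ρ + c*(t-s)) s).comp ρ ha1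
    have h2 := ((hd (ρ - c*(t-s)) s).comp ρ ha2).const_mul e
    refine (h1.add h2).congr_deriv ?_
    ring

lemma contComp2 {H : ℝ → ℝ → ℝ} (hH : Continuous (Function.uncurry H))
    {X : Type*} [TopologicalSpace X] {u v : X → ℝ} (hu : Continuous u) (hv : Continuous v) :
    Continuous fun p : X => H (u p) (v p) := hH.comp (hu.prodMk hv)

noncomputable def Pfun (F : ℝ → ℝ → ℝ) (a s : ℝ) : ℝ := ∫ y in (0:ℝ)..a, F y s

noncomputable def wtf (c : ℝ) (F : ℝ → ℝ → ℝ) (x t : ℝ) : ℝ :=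
  (1/2) * ∫ s in (0:ℝ)..t, (F (x + c*(t-s)) s + F (x - c*(t-s)) s)

noncomputable def wxf (c : ℝ) (F : ℝ → ℝ → ℝ) (x t : ℝ) : ℝ :=
  (1/(2*c)) * ∫ s in (0:ℝ)..t, (F (x + c*(t-s)) s - F (x - c*(t-s)) s)

section Wlayer
variable {c : ℝ} {F F1 : ℝ → ℝ → ℝ} {w : ℝ → ℝ → ℝ}

lemma hPc (hFc : Continuous (Function.uncurry F)) :
    Continuous (Function.uncurry (Pfun F)) := by
  apply intervalIntegral.continuous_parametric_intervalIntegral_of_continuous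
    (f := fun (p : ℝ × ℝ) y => F y p.2) (s := fun p : ℝ × ℝ => p.1)
  · exact hFc.comp (continuous_snd.prodMk continuous_fst.snd)
  · exact continuous_fst

lemma hPd (hFc : Continuous (Function.uncurry F)) :
    ∀ a s, HasDerivAt (fun b => Pfun F b s) (F a s) a := by
  intro a s
  have hcont : Continuous fun y => F y s := hFc.comp (continuous_id.prodMk continuous_const)
  exact intervalIntegral.integral_hasDerivAt_right (hcont.intervalIntegrable _ _)
    hcont.aestronglyMeasurable.stronglyMeasurableAtFilter hcont.continuousAt

lemma hsplit (hFc : Continuous (Function.uncurry F)) :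
    ∀ (a b s : ℝ), (∫ y in a..b, F y s) = Pfun F b s + (-1) * Pfun F a s := by
  intro a b s
  have hcont : Continuous fun y => F y s := hFc.comp (continuous_id.prodMk continuous_const)
  have h := intervalIntegral.integral_add_adjacent_intervals
    (hcont.intervalIntegrable (μ := volume) 0 a) (hcont.intervalIntegrable (μ := volume) a b)
  unfold Pfun
  linarith

lemma hwP (hFc : Continuous (Function.uncurry F))
    (hw : ∀ x t, w x t =
      1 / (2 * c) * ∫ s in (0:ℝ)..t, ∫ y in (x - c * (t - s))..(x + c * (t - s)), F y s)
    (x : ℝ) : (fun t => w x t) = fun t => 1 / (2*c) *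
    ∫ s in (0:ℝ)..t, (Pfun F (x + c*(t-s)) s + (-1) * Pfun F (x - c*(t-s)) s) := by
  funext t
  rw [hw]
  congr 1
  refine intervalIntegral.integral_congr fun s _ => ?_
  simp only [hsplit hFc]

lemma hwc (hFc : Continuous (Function.uncurry F))
    (hw : ∀ x t, w x t =
      1 / (2 * c) * ∫ s in (0:ℝ)..t, ∫ y in (x - c * (t - s))..(x + c * (t - s)), F y s) :
    Continuous (Function.uncurry w) := by
  have heq : Function.uncurry w = fun p : ℝ × ℝ => 1 / (2*c) *
      ∫ s in (0:ℝ)..p.2, (Pfun F (p.1 + c*(p.2-s)) s + (-1) * Pfun F (p.1 - c*(p.2-s)) s) := by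
    funext p
    exact congrFun (hwP hFc hw p.1) p.2
  rw [heq]
  apply Continuous.mul continuous_const
  apply intervalIntegral.continuous_parametric_intervalIntegral_of_continuous
    (f := fun (p : ℝ × ℝ) s => Pfun F (p.1 + c*(p.2-s)) s + (-1) * Pfun F (p.1 - c*(p.2-s)) s)
    (s := fun p : ℝ × ℝ => p.2)
  · exact (contComp2 (hPc hFc) (u := fun q : (ℝ×ℝ)×ℝ => q.1.1 + c*(q.1.2 - q.2))
      (v := fun q => q.2) (by fun_prop) (by fun_prop)).add
      (continuous_const.mul (contComp2 (hPc hFc) (u := fun q : (ℝ×ℝ)×ℝ => q.1.1 - c*(q.1.2 - q.2))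
        (v := fun q => q.2) (by fun_prop) (by fun_prop)))
  · exact continuous_snd

lemma hwt0 (x : ℝ) : wtf c F x 0 = 0 := by simp [wtf]

lemma hwtc (hFc : Continuous (Function.uncurry F)) :
    Continuous (Function.uncurry (wtf c F)) := by
  apply Continuous.mul continuous_const
  apply intervalIntegral.continuous_parametric_intervalIntegral_of_continuous
    (f := fun (p : ℝ × ℝ) s => F (p.1 + c*(p.2-s)) s + F (p.1 - c*(p.2-s)) s)
    (s := fun p : ℝ × ℝ => p.2)
  · exact (contComp2 hFc (u := fun q : (ℝ×ℝ)×ℝ => q.1.1 + c*(q.1.2 - q.2))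
      (v := fun q => q.2) (by fun_prop) (by fun_prop)).add
      (contComp2 hFc (u := fun q : (ℝ×ℝ)×ℝ => q.1.1 - c*(q.1.2 - q.2))
        (v := fun q => q.2) (by fun_prop) (by fun_prop))
  · exact continuous_snd

lemma hwxc (hFc : Continuous (Function.uncurry F)) :
    Continuous (Function.uncurry (wxf c F)) := by
  apply Continuous.mul continuous_const
  apply intervalIntegral.continuous_parametric_intervalIntegral_of_continuous
    (f := fun (p : ℝ × ℝ) s => F (p.1 + c*(p.2-s)) s - F (p.1 - c*(p.2-s)) s)
    (s := fun p : ℝ × ℝ => p.2)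
  · exact (contComp2 hFc (u := fun q : (ℝ×ℝ)×ℝ => q.1.1 + c*(q.1.2 - q.2))
      (v := fun q => q.2) (by fun_prop) (by fun_prop)).sub
      (contComp2 hFc (u := fun q : (ℝ×ℝ)×ℝ => q.1.1 - c*(q.1.2 - q.2))
        (v := fun q => q.2) (by fun_prop) (by fun_prop))
  · exact continuous_snd

lemma hw_t (hc : 0 < c) (hFc : Continuous (Function.uncurry F))
    (hw : ∀ x t, w x t =
      1 / (2 * c) * ∫ s in (0:ℝ)..t, ∫ y in (x - c * (t - s))..(x + c * (t - s)), F y s)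
    (x t : ℝ) : HasDerivAt (fun τ => w x τ) (wtf c F x t) t := by
  rw [hwP hFc hw]
  have h := (domt (hPc hFc) hFc (hPd hFc) c x (-1) t).const_mul (1/(2*c))
  refine h.congr_deriv ?_
  have hi : (fun s => c * F (x + c*(t-s)) s - (-1) * c * F (x - c*(t-s)) s)
      = fun s => c * (F (x + c*(t-s)) s + F (x - c*(t-s)) s) := by funext s; ring
  rw [wtf, hi, intervalIntegral.integral_const_mul]
  have hc' : c ≠ 0 := hc.ne'
  field_simp
  ring

lemma hwt_t (hc : 0 < c) (hFc : Continuous (Function.uncurry F))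
    (hF1c : Continuous (Function.uncurry F1))
    (hFd : ∀ a s, HasDerivAt (fun y => F y s) (F1 a s) a)
    (x t : ℝ) : HasDerivAt (fun τ => wtf c F x τ) (F x t + c^2 * wxf c F1 x t) t := by
  have heq : (fun τ => wtf c F x τ) = fun τ => (1/2) *
      ∫ s in (0:ℝ)..τ, (F (x + c*(τ-s)) s + 1 * F (x - c*(τ-s)) s) := by
    funext τ
    rw [wtf]
    congr 1
    exact intervalIntegral.integral_congr fun s _ => by ring
  rw [heq]
  have h := (domt hFc hF1c hFd c x 1 t).const_mul (1/2)
  refine h.congr_deriv ?_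
  have hi : (fun s => c * F1 (x + c*(t-s)) s - 1 * c * F1 (x - c*(t-s)) s)
      = fun s => c * (F1 (x + c*(t-s)) s - F1 (x - c*(t-s)) s) := by funext s; ring
  rw [wxf, hi, intervalIntegral.integral_const_mul]
  have hc' : c ≠ 0 := hc.ne'
  field_simp
  ring

lemma hw_x (hFc : Continuous (Function.uncurry F))
    (hw : ∀ x t, w x t =
      1 / (2 * c) * ∫ s in (0:ℝ)..t, ∫ y in (x - c * (t - s))..(x + c * (t - s)), F y s)
    (x t : ℝ) : HasDerivAt (fun ρ => w ρ t) (wxf c F x t) x := by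
  have heq : (fun ρ => w ρ t) = fun ρ => 1 / (2*c) *
      ∫ s in (0:ℝ)..t, (Pfun F (ρ + c*(t-s)) s + (-1) * Pfun F (ρ - c*(t-s)) s) := by
    funext ρ
    exact congrFun (hwP hFc hw ρ) t
  rw [heq]
  have h := (domx (hPc hFc) hFc (hPd hFc) c (-1) x t).const_mul (1/(2*c))
  refine h.congr_deriv ?_
  rw [wxf]
  congr 1
  exact intervalIntegral.integral_congr fun s _ => by ring

lemma hwx_x (hFc : Continuous (Function.uncurry F))
    (hF1c : Continuous (Function.uncurry F1))
    (hFd : ∀ a s, HasDerivAt (fun y => F y s) (F1 a s) a)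
    (x t : ℝ) : HasDerivAt (fun ρ => wxf c F ρ t) (wxf c F1 x t) x := by
  have heq : (fun ρ => wxf c F ρ t) = fun ρ => (1/(2*c)) *
      ∫ s in (0:ℝ)..t, (F (ρ + c*(t-s)) s + (-1) * F (ρ - c*(t-s)) s) := by
    funext ρ
    rw [wxf]
    congr 1
    exact intervalIntegral.integral_congr fun s _ => by ring
  rw [heq]
  have h := (domx hFc hF1c hFd c (-1) x t).const_mul (1/(2*c))
  refine h.congr_deriv ?_
  rw [wxf]
  congr 1
  exact intervalIntegral.integral_congr fun s _ => by ring

end Wlayer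

lemma gmul_integrable {α : ℝ} (hα : 0 < α) {ψ : ℝ → ℝ} (hψ : Continuous ψ) :
    IntervalIntegrable (fun u : ℝ => (1 - u ^ 2) ^ (α - 1) * ψ u) volume 0 1 := by
  obtain ⟨M, hM⟩ := isCompact_Icc.exists_bound_of_continuousOn
    (hψ.continuousOn (s := Icc (0:ℝ) 1))
  have hg := gInt hα
  rw [intervalIntegrable_iff, uIoc_of_le (zero_le_one' ℝ)] at hg ⊢
  refine Integrable.mono' (hg.const_mul M) ?_ ?_
  · have hm : Measurable (fun u : ℝ => (1 - u ^ 2) ^ (α - 1) * ψ u) := by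
      apply Measurable.mul ?_ hψ.measurable
      measurability
    exact hm.aestronglyMeasurable
  · filter_upwards [ae_restrict_mem measurableSet_Ioc] with u hu
    have hbase : (0:ℝ) ≤ 1 - u ^ 2 := by nlinarith [hu.1.le, hu.2]
    have hgn : 0 ≤ (1 - u ^ 2) ^ (α - 1) := Real.rpow_nonneg hbase _
    rw [Real.norm_eq_abs, abs_mul, abs_of_nonneg hgn]
    calc (1 - u ^ 2) ^ (α - 1) * |ψ u|
        ≤ (1 - u ^ 2) ^ (α - 1) * M := by
          refine mul_le_mul_of_nonneg_left ?_ hgn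
          simpa [Real.norm_eq_abs] using hM u ⟨hu.1.le, hu.2⟩
      _ = M * (1 - u ^ 2) ^ (α - 1) := mul_comm _ _

lemma contrpow {α : ℝ} (hα : 0 < α) : Continuous fun u : ℝ => (1 - u ^ 2) ^ α := by
  rw [continuous_iff_continuousAt]
  intro u
  exact ContinuousAt.comp (Real.continuousAt_rpow_const _ _ (Or.inr hα.le)) (by fun_prop)

lemma vdiff {α : ℝ} (hα : 0 < α) {A A' : ℝ → ℝ → ℝ}
    (hA : Continuous (Function.uncurry A)) (hA' : Continuous (Function.uncurry A'))
    (hd : ∀ τ u, HasDerivAt (fun τ => A τ u) (A' τ u) τ) (x₀ : ℝ) :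
    HasDerivAt (fun τ => ∫ u in (0:ℝ)..1, (1 - u ^ 2) ^ (α - 1) * A τ u)
      (∫ u in (0:ℝ)..1, (1 - u ^ 2) ^ (α - 1) * A' x₀ u) x₀ := by
  obtain ⟨M, hM⟩ := (isCompact_Icc.prod isCompact_Icc).exists_bound_of_continuousOn
    (hA'.continuousOn (s := Icc (x₀ - 1) (x₀ + 1) ×ˢ Icc (0:ℝ) 1))
  have hgmeas : Measurable (fun u : ℝ => (1 - u ^ 2) ^ (α - 1)) := by measurability
  refine (intervalIntegral.hasDerivAt_integral_of_dominated_loc_of_deriv_le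
    (F := fun τ u => (1 - u ^ 2) ^ (α - 1) * A τ u)
    (F' := fun τ u => (1 - u ^ 2) ^ (α - 1) * A' τ u)
    (bound := fun u => M * (1 - u ^ 2) ^ (α - 1)) (a := 0) (b := 1) (μ := volume)
    (Metric.ball_mem_nhds _ one_pos) ?_ ?_ ?_ ?_ ?_ ?_).2
  · refine Filter.Eventually.of_forall fun τ => ?_
    exact (hgmeas.mul (hA.comp (Continuous.prodMk_right τ)).measurable).aestronglyMeasurable
  · exact gmul_integrable hα (hA.comp (Continuous.prodMk_right x₀))
  · exact (hgmeas.mul (hA'.comp (Continuous.prodMk_right x₀)).measurable).aestronglyMeasurable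
  · refine Filter.Eventually.of_forall fun u hu τ hτ => ?_
    rw [uIoc_of_le (zero_le_one' ℝ)] at hu
    have hbase : (0:ℝ) ≤ 1 - u ^ 2 := by nlinarith [hu.1.le, hu.2]
    have hgn : 0 ≤ (1 - u ^ 2) ^ (α - 1) := Real.rpow_nonneg hbase _
    rw [Real.norm_eq_abs, abs_mul, abs_of_nonneg hgn]
    have hτ' : τ ∈ Icc (x₀ - 1) (x₀ + 1) := by
      have := abs_lt.mp (by simpa [Real.dist_eq] using hτ)
      exact ⟨by linarith [this.1], by linarith [this.2]⟩
    have hb : |A' τ u| ≤ M := by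
      simpa [Real.norm_eq_abs] using hM (τ, u) ⟨hτ', hu.1.le, hu.2⟩
    calc (1 - u ^ 2) ^ (α - 1) * |A' τ u|
        ≤ (1 - u ^ 2) ^ (α - 1) * M := mul_le_mul_of_nonneg_left hb hgn
      _ = M * (1 - u ^ 2) ^ (α - 1) := mul_comm _ _
  · exact (gInt hα).const_mul M
  · exact Filter.Eventually.of_forall fun u _ τ _ => (hd τ u).const_mul _

/-- Beta function `B(a,b) = Γ(a)Γ(b)/Γ(a+b)`. -/
noncomputable def realBeta (a b : ℝ) : ℝ := Real.Gamma a * Real.Gamma b / Real.Gamma (a + b)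

/-- the Erdélyi–Kober average of the solution of the forced wave equation with
zero initial data solves a non-homogeneous Euler–Poisson–Darboux equation. -/
theorem erdelyiKober_forced_wave_solves_EPD (α c : ℝ) (hα : 0 < α) (hc : 0 < c)
    (F : ℝ → ℝ → ℝ) (hF : ContDiff ℝ 2 (fun p : ℝ × ℝ => F p.1 p.2))
    (w : ℝ → ℝ → ℝ)
    (hw : ∀ x t, w x t =
      1 / (2 * c) * ∫ s in (0:ℝ)..t, ∫ y in (x - c * (t - s))..(x + c * (t - s)), F y s)
    (v : ℝ → ℝ → ℝ)
    (hv : ∀ x t, v x t =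
      2 / realBeta α (1 / 2) * ∫ u in (0:ℝ)..1, (1 - u ^ 2) ^ (α - 1) * w x (u * t)) :
    ∀ x t, 0 < t →
      deriv (fun s => deriv (fun r => v x r) s) t + (2 * α / t) * deriv (fun r => v x r) t
        = c ^ 2 * deriv (fun s => deriv (fun r => v r t) s) x
          + 2 / realBeta α (1 / 2) * ∫ u in (0:ℝ)..1, (1 - u ^ 2) ^ (α - 1) * F x (u * t) := by
  intro x t ht
  set K := 2 / realBeta α (1 / 2) with hKdef
  -- partial derivative of F in the first variable
  have hFc : Continuous (Function.uncurry F) := hF.continuous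
  set F1 : ℝ → ℝ → ℝ := fun a s => fderiv ℝ (fun p : ℝ × ℝ => F p.1 p.2) (a, s) (1, 0) with hF1def
  have hF1c : Continuous (Function.uncurry F1) :=
    (hF.continuous_fderiv (by norm_num)).clm_apply continuous_const
  have hFd : ∀ a s, HasDerivAt (fun y => F y s) (F1 a s) a := by
    intro a s
    have h2 := (hF.differentiable (by norm_num) (a, s)).hasFDerivAt
    have h1 : HasDerivAt (fun y : ℝ => ((y, s) : ℝ × ℝ)) (1, 0) a :=
      (hasDerivAt_id a).prodMk (hasDerivAt_const a s)
    exact h2.comp_hasDerivAt a h1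
  -- time derivative of v
  have hA1 : Continuous (Function.uncurry fun τ u => w x (u * τ)) :=
    contComp2 (hwc hFc hw) (u := fun _ : ℝ × ℝ => x) (v := fun p => p.2 * p.1)
      continuous_const (by fun_prop)
  have hA1' : Continuous (Function.uncurry fun τ u => wtf c F x (u * τ) * u) :=
    (contComp2 (hwtc hFc) (u := fun _ : ℝ × ℝ => x) (v := fun p => p.2 * p.1)
      continuous_const (by fun_prop)).mul continuous_snd
  have hd1 : ∀ τ u, HasDerivAt (fun τ => w x (u * τ)) (wtf c F x (u * τ) * u) τ := by
    intro τ u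
    have hm : HasDerivAt (fun τ : ℝ => u * τ) u τ := by
      simpa using (hasDerivAt_id τ).const_mul u
    exact (hw_t hc hFc hw x (u * τ)).comp τ hm
  have hVt : ∀ τ₀ : ℝ, HasDerivAt (fun τ => v x τ)
      (K * ∫ u in (0:ℝ)..1, (1 - u ^ 2) ^ (α - 1) * (wtf c F x (u * τ₀) * u)) τ₀ := by
    intro τ₀
    have h := (vdiff hα hA1 hA1' hd1 τ₀).const_mul K
    have heq : (fun τ => v x τ) = fun τ =>
        K * ∫ u in (0:ℝ)..1, (1 - u ^ 2) ^ (α - 1) * w x (u * τ) := funext fun τ => hv x τ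
    rw [heq]
    exact h
  -- second time derivative of v
  have hA2' : Continuous (Function.uncurry fun τ u =>
      (F x (u * τ) + c ^ 2 * wxf c F1 x (u * τ)) * u * u) := by
    refine Continuous.mul (Continuous.mul ?_ continuous_snd) continuous_snd
    exact (contComp2 hFc (u := fun _ : ℝ × ℝ => x) (v := fun p => p.2 * p.1)
        continuous_const (by fun_prop)).add
      (continuous_const.mul (contComp2 (hwxc hF1c) (u := fun _ : ℝ × ℝ => x)
        (v := fun p => p.2 * p.1) continuous_const (by fun_prop)))
  have hd2 : ∀ τ u, HasDerivAt (fun τ => wtf c F x (u * τ) * u)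
      ((F x (u * τ) + c ^ 2 * wxf c F1 x (u * τ)) * u * u) τ := by
    intro τ u
    have hm : HasDerivAt (fun τ : ℝ => u * τ) u τ := by
      simpa using (hasDerivAt_id τ).const_mul u
    exact ((hwt_t hc hFc hF1c hFd x (u * τ)).comp τ hm).mul_const u
  have hV2 : HasDerivAt
      (fun τ => K * ∫ u in (0:ℝ)..1, (1 - u ^ 2) ^ (α - 1) * (wtf c F x (u * τ) * u))
      (K * ∫ u in (0:ℝ)..1, (1 - u ^ 2) ^ (α - 1) *
        ((F x (u * t) + c ^ 2 * wxf c F1 x (u * t)) * u * u)) t :=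
    (vdiff hα hA1' hA2' hd2 t).const_mul K
  -- space derivatives of v
  have hA3 : Continuous (Function.uncurry fun ρ u => w ρ (u * t)) :=
    contComp2 (hwc hFc hw) (u := fun p : ℝ × ℝ => p.1) (v := fun p => p.2 * t)
      continuous_fst (by fun_prop)
  have hA3' : Continuous (Function.uncurry fun ρ u => wxf c F ρ (u * t)) :=
    contComp2 (hwxc hFc) (u := fun p : ℝ × ℝ => p.1) (v := fun p => p.2 * t)
      continuous_fst (by fun_prop)
  have hA4' : Continuous (Function.uncurry fun ρ u => wxf c F1 ρ (u * t)) :=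
    contComp2 (hwxc hF1c) (u := fun p : ℝ × ℝ => p.1) (v := fun p => p.2 * t)
      continuous_fst (by fun_prop)
  have hd3 : ∀ ρ u, HasDerivAt (fun ρ => w ρ (u * t)) (wxf c F ρ (u * t)) ρ :=
    fun ρ u => hw_x hFc hw ρ (u * t)
  have hd4 : ∀ ρ u, HasDerivAt (fun ρ => wxf c F ρ (u * t)) (wxf c F1 ρ (u * t)) ρ :=
    fun ρ u => hwx_x hFc hF1c hFd ρ (u * t)
  have hVx : ∀ r : ℝ, HasDerivAt (fun ρ => v ρ t)
      (K * ∫ u in (0:ℝ)..1, (1 - u ^ 2) ^ (α - 1) * wxf c F r (u * t)) r := by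
    intro r
    have h := (vdiff hα hA3 hA3' hd3 r).const_mul K
    have heq : (fun ρ => v ρ t) = fun ρ =>
        K * ∫ u in (0:ℝ)..1, (1 - u ^ 2) ^ (α - 1) * w ρ (u * t) := funext fun ρ => hv ρ t
    rw [heq]
    exact h
  have hV4 : HasDerivAt
      (fun ρ => K * ∫ u in (0:ℝ)..1, (1 - u ^ 2) ^ (α - 1) * wxf c F ρ (u * t))
      (K * ∫ u in (0:ℝ)..1, (1 - u ^ 2) ^ (α - 1) * wxf c F1 x (u * t)) x :=
    (vdiff hα hA3' hA4' hd4 x).const_mul K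
  -- rewrite the goal derivatives
  have e1 : deriv (fun s => deriv (fun r => v x r) s) t
      = K * ∫ u in (0:ℝ)..1, (1 - u ^ 2) ^ (α - 1) *
        ((F x (u * t) + c ^ 2 * wxf c F1 x (u * t)) * u * u) := by
    have hDeq : (fun s => deriv (fun r => v x r) s) = fun τ₀ =>
        K * ∫ u in (0:ℝ)..1, (1 - u ^ 2) ^ (α - 1) * (wtf c F x (u * τ₀) * u) :=
      funext fun s => (hVt s).deriv
    rw [hDeq]
    exact hV2.deriv
  have e2 : deriv (fun r => v x r) t
      = K * ∫ u in (0:ℝ)..1, (1 - u ^ 2) ^ (α - 1) * (wtf c F x (u * t) * u) := (hVt t).deriv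
  have e3 : deriv (fun s => deriv (fun r => v r t) s) x
      = K * ∫ u in (0:ℝ)..1, (1 - u ^ 2) ^ (α - 1) * wxf c F1 x (u * t) := by
    have hDeq : (fun s => deriv (fun r => v r t) s) = fun r =>
        K * ∫ u in (0:ℝ)..1, (1 - u ^ 2) ^ (α - 1) * wxf c F r (u * t) :=
      funext fun r => (hVx r).deriv
    rw [hDeq]
    exact hV4.deriv
  rw [e1, e2, e3]
  -- remaining: pure integral identities
  have hwtfc : Continuous fun u : ℝ => wtf c F x (u * t) :=
    contComp2 (hwtc hFc) (u := fun _ : ℝ => x) (v := fun u => u * t)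
      continuous_const (by fun_prop)
  have hXc : Continuous fun u : ℝ => F x (u * t) + c ^ 2 * wxf c F1 x (u * t) :=
    (contComp2 hFc (u := fun _ : ℝ => x) (v := fun u => u * t)
        continuous_const (by fun_prop)).add
      (continuous_const.mul (contComp2 (hwxc hF1c) (u := fun _ : ℝ => x)
        (v := fun u => u * t) continuous_const (by fun_prop)))
  -- integration by parts via FTC
  have hterm1_int : IntervalIntegrable
      (fun u : ℝ => α * (1 - u ^ 2) ^ (α - 1) * (-(2 * u)) * wtf c F x (u * t)) volume 0 1 := by
    have heq : (fun u : ℝ => α * (1 - u ^ 2) ^ (α - 1) * (-(2 * u)) * wtf c F x (u * t))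
        = fun u => (1 - u ^ 2) ^ (α - 1) * (α * (-(2 * u)) * wtf c F x (u * t)) := by
      funext u; ring
    rw [heq]
    exact gmul_integrable hα ((Continuous.mul (by fun_prop) hwtfc))
  have hterm2_int : IntervalIntegrable
      (fun u : ℝ => (1 - u ^ 2) ^ α * ((F x (u * t) + c ^ 2 * wxf c F1 x (u * t)) * t))
      volume 0 1 :=
    (((contrpow hα).mul (hXc.mul continuous_const))).intervalIntegrable (μ := volume) _ _
  have hφd : ∀ u ∈ Ioo (0:ℝ) 1, HasDerivAt (fun u => (1 - u ^ 2) ^ α * wtf c F x (u * t))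
      (α * (1 - u ^ 2) ^ (α - 1) * (-(2 * u)) * wtf c F x (u * t)
        + (1 - u ^ 2) ^ α * ((F x (u * t) + c ^ 2 * wxf c F1 x (u * t)) * t)) u := by
    intro u hu
    have hbase : (0:ℝ) < 1 - u ^ 2 := by nlinarith [hu.1, hu.2]
    have h1 : HasDerivAt (fun u : ℝ => 1 - u ^ 2) (-(2 * u)) u := by
      have := (hasDerivAt_pow 2 u).const_sub 1
      refine this.congr_deriv ?_
      norm_num
    have h2 : HasDerivAt (fun u : ℝ => (1 - u ^ 2) ^ α)
        (-(2 * u) * α * (1 - u ^ 2) ^ (α - 1)) u := h1.rpow_const (Or.inl hbase.ne')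
    have hm : HasDerivAt (fun u : ℝ => u * t) t u := by
      simpa using (hasDerivAt_id u).mul_const t
    have h3 : HasDerivAt (fun u : ℝ => wtf c F x (u * t))
        ((F x (u * t) + c ^ 2 * wxf c F1 x (u * t)) * t) u :=
      by have := (hwt_t hc hFc hF1c hFd x (u * t)).comp u hm; exact this
    refine (h2.mul h3).congr_deriv ?_
    ring
  have hFTC : (∫ u in (0:ℝ)..1,
      (α * (1 - u ^ 2) ^ (α - 1) * (-(2 * u)) * wtf c F x (u * t)
        + (1 - u ^ 2) ^ α * ((F x (u * t) + c ^ 2 * wxf c F1 x (u * t)) * t))) = 0 := by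
    have h := intervalIntegral.integral_eq_sub_of_hasDeriv_right_of_le
      (f := fun u : ℝ => (1 - u ^ 2) ^ α * wtf c F x (u * t))
      (f' := fun u : ℝ => α * (1 - u ^ 2) ^ (α - 1) * (-(2 * u)) * wtf c F x (u * t)
        + (1 - u ^ 2) ^ α * ((F x (u * t) + c ^ 2 * wxf c F1 x (u * t)) * t))
      zero_le_one (((contrpow hα).mul hwtfc).continuousOn)
      (fun u hu => (hφd u hu).hasDerivWithinAt) (hterm1_int.add hterm2_int)
    rw [h]
    norm_num [Real.zero_rpow hα.ne', Real.one_rpow, hwt0]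
  -- abbreviations for the four integrals
  set A := ∫ u in (0:ℝ)..1, (1 - u ^ 2) ^ (α - 1) *
    ((F x (u * t) + c ^ 2 * wxf c F1 x (u * t)) * u * u) with hA
  set Bt := ∫ u in (0:ℝ)..1, (1 - u ^ 2) ^ (α - 1) * (wtf c F x (u * t) * u) with hBt
  set Cx := ∫ u in (0:ℝ)..1, (1 - u ^ 2) ^ (α - 1) * wxf c F1 x (u * t) with hCx
  set D := ∫ u in (0:ℝ)..1, (1 - u ^ 2) ^ (α - 1) * F x (u * t) with hD
  set J := ∫ u in (0:ℝ)..1, (1 - u ^ 2) ^ α * (F x (u * t) + c ^ 2 * wxf c F1 x (u * t)) with hJ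
  have hsplit2 : (-(2 * α)) * Bt + t * J = 0 := by
    have e1' : (∫ u in (0:ℝ)..1, α * (1 - u ^ 2) ^ (α - 1) * (-(2 * u)) * wtf c F x (u * t))
        = (-(2 * α)) * Bt := by
      rw [hBt, ← intervalIntegral.integral_const_mul]
      exact intervalIntegral.integral_congr fun u _ => by ring
    have e2' : (∫ u in (0:ℝ)..1,
        (1 - u ^ 2) ^ α * ((F x (u * t) + c ^ 2 * wxf c F1 x (u * t)) * t)) = t * J := by
      rw [hJ, ← intervalIntegral.integral_const_mul]
      exact intervalIntegral.integral_congr fun u _ => by ring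
    rw [← e1', ← e2', ← intervalIntegral.integral_add hterm1_int hterm2_int]
    exact hFTC
  have ptwise : ∀ u ∈ uIcc (0:ℝ) 1,
      (1 - u ^ 2) ^ (α - 1) * u ^ 2 + (1 - u ^ 2) ^ α = (1 - u ^ 2) ^ (α - 1) := by
    intro u hu
    rw [uIcc_of_le (zero_le_one' ℝ)] at hu
    rcases lt_or_eq_of_le hu.2 with h | h
    · have hbase : (0:ℝ) < 1 - u ^ 2 := by nlinarith [hu.1]
      have hr : (1 - u ^ 2) ^ α = (1 - u ^ 2) ^ (α - 1) * (1 - u ^ 2) := by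
        rw [show α = (α - 1) + 1 by ring, Real.rpow_add hbase, Real.rpow_one]
        ring_nf
      rw [hr]; ring
    · subst h
      norm_num [Real.zero_rpow hα.ne']
  have hintA : IntervalIntegrable (fun u : ℝ => (1 - u ^ 2) ^ (α - 1) *
      ((F x (u * t) + c ^ 2 * wxf c F1 x (u * t)) * u * u)) volume 0 1 :=
    gmul_integrable hα ((hXc.mul continuous_id).mul continuous_id)
  have hintJ : IntervalIntegrable (fun u : ℝ => (1 - u ^ 2) ^ α *
      (F x (u * t) + c ^ 2 * wxf c F1 x (u * t))) volume 0 1 :=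
    ((contrpow hα).mul hXc).intervalIntegrable (μ := volume) _ _
  have hintD : IntervalIntegrable (fun u : ℝ => (1 - u ^ 2) ^ (α - 1) * F x (u * t)) volume 0 1 :=
    gmul_integrable hα (contComp2 hFc (u := fun _ : ℝ => x) (v := fun u => u * t)
      continuous_const (by fun_prop))
  have hintC : IntervalIntegrable
      (fun u : ℝ => (1 - u ^ 2) ^ (α - 1) * wxf c F1 x (u * t)) volume 0 1 :=
    gmul_integrable hα (contComp2 (hwxc hF1c) (u := fun _ : ℝ => x) (v := fun u => u * t)
      continuous_const (by fun_prop))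
  have key2 : A + J = c ^ 2 * Cx + D := by
    rw [hA, hJ, hCx, hD]
    rw [← intervalIntegral.integral_add hintA hintJ]
    rw [show c ^ 2 * (∫ u in (0:ℝ)..1, (1 - u ^ 2) ^ (α - 1) * wxf c F1 x (u * t))
        = ∫ u in (0:ℝ)..1, c ^ 2 * ((1 - u ^ 2) ^ (α - 1) * wxf c F1 x (u * t)) from
      (intervalIntegral.integral_const_mul _ _).symm]
    rw [← intervalIntegral.integral_add (hintC.const_mul (c ^ 2)) hintD]
    refine intervalIntegral.integral_congr fun u hu => ?_
    linear_combination (F x (u * t) + c ^ 2 * wxf c F1 x (u * t)) * ptwise u hu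
  have hBtJ : 2 * α / t * Bt = J := by
    rw [div_mul_eq_mul_div, div_eq_iff ht.ne']
    linarith
  calc K * A + 2 * α / t * (K * Bt)
      = K * (A + 2 * α / t * Bt) := by ring
    _ = K * (A + J) := by rw [hBtJ]
    _ = K * (c ^ 2 * Cx + D) := by rw [key2]
    _ = c ^ 2 * (K * Cx) + K * D := by ring
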